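/- Let G be the graph obtained by taking two disjoint butterflies with heads u_1 and u_2, and joining u_1 to u_2 by an internally disjoint induced path of odd length with no other edges between the two butterflies or from the path's interior to the butterflies. Then G has no strong stable set. -/

import Mathlib

open SimpleGraph

section Defs

variable {V : Type*}

/-- A stable (independent) set of a graph. -/
def IsStable (G : SimpleGraph V) (S : Set V) : Prop :=
  ∀ ⦃u v : V⦄, u ∈ S → v ∈ S → ¬ G.Adj u v

/-- `C` is a maximal clique of the induced subgraph `G[W]`. -/
def IsMaxCliqueOn (G : SimpleGraph V) (W C : Set V) : Prop :=
  C ⊆ W ∧ G.IsClique C ∧ ∀ D : Set V, D ⊆ W → G.IsClique D → C ⊆ D → D = C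

/-- `C` is a maximal clique of `G`. -/
def IsMaxClique (G : SimpleGraph V) (C : Set V) : Prop :=
  G.IsClique C ∧ ∀ D : Set V, G.IsClique D → C ⊆ D → D = C

/-- `S` is a strong stable set of the induced subgraph `G[W]`. -/
def StrongStableOn (G : SimpleGraph V) (W S : Set V) : Prop :=
  S ⊆ W ∧ IsStable G S ∧ ∀ C : Set V, IsMaxCliqueOn G W C → C.Nonempty → (S ∩ C).Nonempty

/-- `S` is a strong stable set of `G`. -/
def StrongStable (G : SimpleGraph V) (S : Set V) : Prop :=
  IsStable G S ∧ ∀ C : Set V, IsMaxClique G C → C.Nonempty → (S ∩ C).Nonempty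

/-- The induced subgraph `G[W]` is strongly perfect. -/
def StronglyPerfectOn (G : SimpleGraph V) (W : Set V) : Prop :=
  ∀ U : Set V, U ⊆ W → ∃ S : Set V, StrongStableOn G U S

/-- `G` is strongly perfect: every induced subgraph has a strong stable set. -/
def StronglyPerfect (G : SimpleGraph V) : Prop :=
  ∀ U : Set V, ∃ S : Set V, StrongStableOn G U S

/-- `G` is minimal non-strongly-perfect. -/
def MinimalNSP (G : SimpleGraph V) : Prop :=
  ¬ StronglyPerfect G ∧ ∀ W : Set V, W ≠ Set.univ → StronglyPerfectOn G W

end Defs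

section Aux

variable {V : Type*} {G : SimpleGraph V} {S : Set V}

lemma pair_or (hS : StrongStable G S) {x y t : V} (hxy : G.Adj x y)
    (hcn : ∀ z, G.Adj z x → G.Adj z y → z = t ∧ t ∉ S) : x ∈ S ∨ y ∈ S := by
  by_cases h : G.Adj t x ∧ G.Adj t y
  · have hC : IsMaxClique G {t, x, y} := by
      constructor
      · intro p hp q hq hpq
        simp only [Set.mem_insert_iff, Set.mem_singleton_iff] at hp hq
        rcases hp with rfl | rfl | rfl <;> rcases hq with rfl | rfl | rfl <;>
          first
          | exact absurd rfl hpq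
          | exact h.1 | exact h.2 | exact h.1.symm | exact h.2.symm
          | exact hxy | exact hxy.symm
      · intro D hD hsub
        apply Set.Subset.antisymm _ hsub
        intro z hz
        by_contra hz'
        simp only [Set.mem_insert_iff, Set.mem_singleton_iff, not_or] at hz'
        obtain ⟨hzt, hzx, hzy⟩ := hz'
        have h1 : G.Adj z x := hD hz (hsub (by simp)) hzx
        have h2 : G.Adj z y := hD hz (hsub (by simp)) hzy
        exact hzt (hcn z h1 h2).1
    obtain ⟨s, hsS, hsC⟩ := hS.2 _ hC ⟨t, by simp⟩
    simp only [Set.mem_insert_iff, Set.mem_singleton_iff] at hsC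
    rcases hsC with rfl | rfl | rfl
    · exact absurd hsS (hcn s h.1 h.2).2
    · exact Or.inl hsS
    · exact Or.inr hsS
  · have hC : IsMaxClique G {x, y} := by
      constructor
      · intro p hp q hq hpq
        simp only [Set.mem_insert_iff, Set.mem_singleton_iff] at hp hq
        rcases hp with rfl | rfl <;> rcases hq with rfl | rfl <;>
          first
          | exact absurd rfl hpq
          | exact hxy | exact hxy.symm
      · intro D hD hsub
        apply Set.Subset.antisymm _ hsub
        intro z hz
        by_contra hz'
        simp only [Set.mem_insert_iff, Set.mem_singleton_iff, not_or] at hz'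
        obtain ⟨hzx, hzy⟩ := hz'
        have h1 : G.Adj z x := hD hz (hsub (by simp)) hzx
        have h2 : G.Adj z y := hD hz (hsub (by simp)) hzy
        obtain ⟨rfl, -⟩ := hcn z h1 h2
        exact h ⟨h1, h2⟩
    obtain ⟨s, hsS, hsC⟩ := hS.2 _ hC ⟨x, by simp⟩
    simp only [Set.mem_insert_iff, Set.mem_singleton_iff] at hsC
    rcases hsC with rfl | rfl
    · exact Or.inl hsS
    · exact Or.inr hsS

lemma chain_parity (hstab : IsStable G S) (f : ℕ → V) (L : ℕ)
    (hadj : ∀ i, i < L → G.Adj (f i) (f (i + 1)))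
    (hhit : ∀ i, i < L → f i ∈ S ∨ f (i + 1) ∈ S)
    (h0 : f 0 ∈ S) : ∀ i, i ≤ L → (f i ∈ S ↔ Even i) := by
  intro i
  induction i with
  | zero => intro _; simpa using h0
  | succ k ih =>
    intro hk
    have hkL : k < L := hk
    have ihk := ih (le_of_lt hkL)
    rcases Nat.even_or_odd k with he | ho
    · have hfk : f k ∈ S := ihk.mpr he
      have : f (k + 1) ∉ S := fun hm => hstab hfk hm (hadj k hkL)
      simp [this, Nat.even_add_one, he]
    · have hfk : f k ∉ S := fun hm => (Nat.not_even_iff_odd.mpr ho) (ihk.mp hm)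
      have : f (k + 1) ∈ S := (hhit k hkL).resolve_left hfk
      simp [this, Nat.even_add_one, Nat.not_even_iff_odd.mpr ho]

end Aux

/-- Vertices of a butterfly with path-lengths `α = |P₁|`, `β = |P₂|`, `γ = |P₃|`:
`none` is the head `v`, and `some i` is the `i`-th vertex of the induced path
`a_1-…-a_k(=b_1)-…-b_ℓ(=c_1)-…-c_m` of total length `α+β+γ`. -/
abbrev ButterflyV (a b c : ℕ) := Option (Fin (a + b + c + 1))

/-- The butterfly: the head `v` is complete to `P₂ ∪ {a_1, c_m}`, i.e. to the path
vertices with index `0`, `α+β+γ`, or in `[α, α+β]`, and no other edges. -/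
def butterflyRel (a b c : ℕ) : ButterflyV a b c → ButterflyV a b c → Prop
  | some i, some j => (j : ℕ) = (i : ℕ) + 1
  | none, some i => (i : ℕ) = 0 ∨ (i : ℕ) = a + b + c ∨ (a ≤ (i : ℕ) ∧ (i : ℕ) ≤ a + b)
  | _, _ => False

def butterfly (a b c : ℕ) : SimpleGraph (ButterflyV a b c) :=
  SimpleGraph.fromRel (butterflyRel a b c)

/-- Join two graphs (given by relations `ra`, `rb`) by an induced path
`a0-r_1-…-r_n-b0` of length `n+1` from the vertex `a0` of the first graph to the
vertex `b0` of the second graph, with no other edges between the parts. -/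
def joinRel {A B : Type*} (ra : A → A → Prop) (rb : B → B → Prop) (a0 : A) (b0 : B)
    (n : ℕ) : (A ⊕ (Fin n ⊕ B)) → (A ⊕ (Fin n ⊕ B)) → Prop
  | Sum.inl x, Sum.inl y => ra x y
  | Sum.inr (Sum.inr x), Sum.inr (Sum.inr y) => rb x y
  | Sum.inr (Sum.inl i), Sum.inr (Sum.inl j) => (j : ℕ) = (i : ℕ) + 1
  | Sum.inl x, Sum.inr (Sum.inl i) => x = a0 ∧ (i : ℕ) = 0
  | Sum.inr (Sum.inl i), Sum.inr (Sum.inr y) => (i : ℕ) = n - 1 ∧ y = b0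
  | Sum.inl x, Sum.inr (Sum.inr y) => n = 0 ∧ x = a0 ∧ y = b0
  | _, _ => False

/-- Two disjoint butterflies whose heads are joined by an induced path
`u_1-r_1-…-r_n-u_2` of length `n+1`; the path is odd, i.e. `n` is even. -/
def butterflyJoin (a₁ b₁ c₁ a₂ b₂ c₂ n : ℕ) :
    SimpleGraph (ButterflyV a₁ b₁ c₁ ⊕ (Fin n ⊕ ButterflyV a₂ b₂ c₂)) :=
  SimpleGraph.fromRel
    (joinRel (butterflyRel a₁ b₁ c₁) (butterflyRel a₂ b₂ c₂) none none n)

lemma butterfly_head {W : Type*} {G : SimpleGraph W} {S : Set W}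
    (hS : StrongStable G S) {a b c : ℕ}
    (ha : 2 ≤ a) (hae : Even a) (hbo : Odd b) (hc : 2 ≤ c) (hce : Even c)
    (e : ButterflyV a b c → W)
    (hadj : ∀ x y, G.Adj (e x) (e y) ↔
      (x ≠ y ∧ (butterflyRel a b c x y ∨ butterflyRel a b c y x)))
    (hclosed : ∀ (i : Fin (a + b + c + 1)) (z : W), G.Adj z (e (some i)) → ∃ w, z = e w) :
    e none ∈ S := by
  by_contra hv
  obtain ⟨b', hb'⟩ := hbo
  have hb1 : 1 ≤ b := by omega
  have hlt : ∀ i : ℕ, min i (a + b + c) < a + b + c + 1 := fun i => by omega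
  set p : ℕ → W := fun i => e (some ⟨min i (a + b + c), hlt i⟩) with hp
  have padj : ∀ i, i < a + b + c → G.Adj (p i) (p (i + 1)) := by
    intro i hi
    rw [hp, hadj]
    refine ⟨?_, Or.inl ?_⟩
    · simp only [ne_eq, Option.some.injEq, Fin.mk.injEq]
      omega
    · simp only [butterflyRel]
      omega
  have hcn : ∀ i, i < a + b + c → ∀ z, G.Adj z (p i) → G.Adj z (p (i + 1)) →
      z = e none ∧ e none ∉ S := by
    intro i hi z h1 h2
    obtain ⟨w, rfl⟩ := hclosed _ z h1
    match w with
    | none => exact ⟨rfl, hv⟩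
    | some k =>
      exfalso
      rw [hp, hadj] at h1 h2
      have hk := k.isLt
      obtain ⟨-, h1'⟩ := h1
      obtain ⟨-, h2'⟩ := h2
      simp only [butterflyRel] at h1' h2'
      omega
  have hhit : ∀ i, i < a + b + c → p i ∈ S ∨ p (i + 1) ∈ S := by
    intro i hi
    exact pair_or hS (padj i hi) (hcn i hi)
  have hadj0 : G.Adj (e none) (p 0) := by
    rw [hp, hadj]
    refine ⟨by simp, Or.inl ?_⟩
    simp only [butterflyRel]
    omega
  have hp0 : p 0 ∈ S := by
    refine (pair_or (t := e none) hS hadj0 ?_).resolve_left (fun h => absurd h hv)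
    intro z hz1 hz2
    obtain ⟨w, rfl⟩ := hclosed _ z hz2
    match w with
    | none => exact ⟨rfl, hv⟩
    | some k =>
      exfalso
      rw [hadj] at hz1
      rw [hp, hadj] at hz2
      have hk := k.isLt
      obtain ⟨-, hz1'⟩ := hz1
      obtain ⟨-, hz2'⟩ := hz2
      simp only [butterflyRel, false_or, min_self] at hz1' hz2'
      omega
  have hadjL : G.Adj (e none) (p (a + b + c)) := by
    rw [hp, hadj]
    refine ⟨by simp, Or.inl ?_⟩
    simp only [butterflyRel]
    omega
  have hpL : p (a + b + c) ∈ S := by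
    refine (pair_or (t := e none) hS hadjL ?_).resolve_left (fun h => absurd h hv)
    intro z hz1 hz2
    obtain ⟨w, rfl⟩ := hclosed _ z hz2
    match w with
    | none => exact ⟨rfl, hv⟩
    | some k =>
      exfalso
      rw [hadj] at hz1
      rw [hp, hadj] at hz2
      have hk := k.isLt
      obtain ⟨-, hz1'⟩ := hz1
      obtain ⟨-, hz2'⟩ := hz2
      simp only [butterflyRel, false_or, min_self] at hz1' hz2'
      omega
  have hpar := chain_parity hS.1 p (a + b + c) padj hhit hp0 (a + b + c) le_rfl
  have hodd : ¬ Even (a + b + c) := by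
    obtain ⟨a', ha'⟩ := hae
    obtain ⟨c', hc'⟩ := hce
    rw [Nat.even_iff]
    omega
  exact hodd (hpar.mp hpL)

theorem two_butterflies_odd_path_no_sss (a₁ b₁ c₁ a₂ b₂ c₂ n : ℕ)
    (ha₁ : 2 ≤ a₁) (ha₁e : Even a₁) (hb₁o : Odd b₁) (hc₁ : 2 ≤ c₁) (hc₁e : Even c₁)
    (ha₂ : 2 ≤ a₂) (ha₂e : Even a₂) (hb₂o : Odd b₂) (hc₂ : 2 ≤ c₂) (hc₂e : Even c₂)
    (hne : Even n) :
    ¬ ∃ S : Set (ButterflyV a₁ b₁ c₁ ⊕ (Fin n ⊕ ButterflyV a₂ b₂ c₂)),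
      StrongStable (butterflyJoin a₁ b₁ c₁ a₂ b₂ c₂ n) S := by
  rintro ⟨S, hS⟩
  set G := butterflyJoin a₁ b₁ c₁ a₂ b₂ c₂ n with hG
  -- membership of the two heads
  have hu1 : (Sum.inl none : ButterflyV a₁ b₁ c₁ ⊕ (Fin n ⊕ ButterflyV a₂ b₂ c₂)) ∈ S := by
    apply butterfly_head hS ha₁ ha₁e hb₁o hc₁ hc₁e (fun x => Sum.inl x)
    · intro x y
      simp [hG, butterflyJoin, fromRel_adj, joinRel]
    · intro i z h
      match z with
      | Sum.inl w => exact ⟨w, rfl⟩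
      | Sum.inr (Sum.inl j) => simp [hG, butterflyJoin, fromRel_adj, joinRel] at h
      | Sum.inr (Sum.inr y) => simp [hG, butterflyJoin, fromRel_adj, joinRel] at h
  have hu2 : (Sum.inr (Sum.inr none) : ButterflyV a₁ b₁ c₁ ⊕ (Fin n ⊕ ButterflyV a₂ b₂ c₂)) ∈ S := by
    apply butterfly_head hS ha₂ ha₂e hb₂o hc₂ hc₂e (fun x => Sum.inr (Sum.inr x))
    · intro x y
      simp [hG, butterflyJoin, fromRel_adj, joinRel]
    · intro i z h
      match z with
      | Sum.inr (Sum.inr w) => exact ⟨w, rfl⟩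
      | Sum.inl x => simp [hG, butterflyJoin, fromRel_adj, joinRel] at h
      | Sum.inr (Sum.inl j) => simp [hG, butterflyJoin, fromRel_adj, joinRel] at h
  rcases Nat.eq_zero_or_pos n with hn0 | hnpos
  · -- n = 0 : the heads are adjacent
    subst hn0
    have : G.Adj (Sum.inl none) (Sum.inr (Sum.inr none)) := by
      simp [hG, butterflyJoin, fromRel_adj, joinRel]
    exact hS.1 hu1 hu2 this
  · -- n ≥ 1 (in fact even, so ≥ 2)
    have hn2 : 2 ≤ n := by
      obtain ⟨m, hm⟩ := hne; omega
    set u1 : ButterflyV a₁ b₁ c₁ ⊕ (Fin n ⊕ ButterflyV a₂ b₂ c₂) := Sum.inl none with hu1d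
    set u2 : ButterflyV a₁ b₁ c₁ ⊕ (Fin n ⊕ ButterflyV a₂ b₂ c₂) := Sum.inr (Sum.inr none) with hu2d
    set q : ℕ → ButterflyV a₁ b₁ c₁ ⊕ (Fin n ⊕ ButterflyV a₂ b₂ c₂) :=
      fun i => if h0 : i = 0 then u1 else if h : i - 1 < n then Sum.inr (Sum.inl ⟨i - 1, h⟩) else u2
      with hq
    have hq0 : q 0 = u1 := by simp [hq]
    have hqmid : ∀ i (hi : i < n), q (i + 1) = Sum.inr (Sum.inl ⟨i, hi⟩) := by
      intro i hi; simp [hq, hi]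
    have hqlast : q (n + 1) = u2 := by simp [hq]
    have qadj : ∀ i, i < n + 1 → G.Adj (q i) (q (i + 1)) := by
      intro i hi
      match i with
      | 0 =>
        rw [hq0, hqmid 0 (by omega)]
        simp [hG, u1, butterflyJoin, fromRel_adj, joinRel]
      | (j + 1) =>
        rcases Nat.lt_or_ge (j + 1) n with hj | hj
        · rw [hqmid j (by omega), hqmid (j + 1) hj]
          simp [hG, butterflyJoin, fromRel_adj, joinRel]
        · have hjn : j + 1 = n := by omega
          rw [hqmid j (by omega), show j + 1 + 1 = n + 1 from by omega, hqlast]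
          simp [hG, u2, butterflyJoin, fromRel_adj, joinRel]
          omega
    have qcn : ∀ i, i < n + 1 → ∀ z, G.Adj z (q i) → G.Adj z (q (i + 1)) →
        z = u1 ∧ u1 ∉ S := by
      intro i hi z h1 h2
      exfalso
      match i with
      | 0 =>
        rw [hq0] at h1
        rw [hqmid 0 (by omega)] at h2
        match z with
        | Sum.inl x =>
          simp [hG, u1, butterflyJoin, fromRel_adj, joinRel] at h1 h2
          obtain ⟨-, rfl, -⟩ := h2
          exact h1.1 rfl
        | Sum.inr (Sum.inl k) =>
          simp [hG, u1, butterflyJoin, fromRel_adj, joinRel] at h1 h2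
          have := k.isLt
          omega
        | Sum.inr (Sum.inr y) =>
          simp [hG, u1, butterflyJoin, fromRel_adj, joinRel] at h1 h2
          omega
      | (j + 1) =>
        rcases Nat.lt_or_ge (j + 1) n with hj | hj
        · rw [hqmid j (by omega)] at h1
          rw [hqmid (j + 1) hj] at h2
          match z with
          | Sum.inl x =>
            simp [hG, butterflyJoin, fromRel_adj, joinRel] at h1 h2
          | Sum.inr (Sum.inl k) =>
            simp [hG, butterflyJoin, fromRel_adj, joinRel] at h1 h2
            omega
          | Sum.inr (Sum.inr y) =>
            simp [hG, butterflyJoin, fromRel_adj, joinRel] at h1 h2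
            omega
        · have hjn : j + 1 = n := by omega
          rw [hqmid j (by omega)] at h1
          rw [show j + 1 + 1 = n + 1 from by omega, hqlast] at h2
          match z with
          | Sum.inl x =>
            simp [hG, u2, butterflyJoin, fromRel_adj, joinRel] at h1 h2
            omega
          | Sum.inr (Sum.inl k) =>
            simp [hG, u2, butterflyJoin, fromRel_adj, joinRel] at h1 h2
            have := k.isLt
            omega
          | Sum.inr (Sum.inr y) =>
            simp [hG, u2, butterflyJoin, fromRel_adj, joinRel] at h1 h2
            obtain ⟨-, rfl⟩ := h1
            simp at h2
    have qhit : ∀ i, i < n + 1 → q i ∈ S ∨ q (i + 1) ∈ S := by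
      intro i hi
      exact pair_or (t := u1) hS (qadj i hi) (qcn i hi)
    have hpar := chain_parity hS.1 q (n + 1) qadj qhit (hq0 ▸ hu1) (n + 1) le_rfl
    rw [hqlast] at hpar
    have : Even (n + 1) := hpar.mp hu2
    obtain ⟨m, hm⟩ := hne
    obtain ⟨m', hm'⟩ := this
    omega
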